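/- Let A_1,...,A_n and B_1,...,B_n be n×n complex Hermitian matrices with the synchronous Hadamard property, and ω_1,...,ω_n nonnegative reals. Then (∑_i ω_i)(∑_j ω_j (A_j ∘ B_j)) ≥ (∑_i ω_i A_i) ∘ (∑_j ω_j B_j) in the Loewner order. -/

import Mathlib

open Matrix ComplexOrder

lemma psd_smul_c {m : ℕ} (c : ℝ) (hc : 0 ≤ c) {M : Matrix (Fin m) (Fin m) ℂ}
    (hM : M.PosSemidef) : ((c : ℂ) • M).PosSemidef := by
  refine ⟨?_, fun x => ?_⟩
  · have := hM.isHermitian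
    unfold Matrix.IsHermitian at *
    rw [conjTranspose_smul, this]
    congr 1
    simp
  · exact (hM.smul (a := (c : ℂ)) (by exact_mod_cast hc)).2 x

lemma psd_sum {m : ℕ} {ι : Type*} (s : Finset ι) (f : ι → Matrix (Fin m) (Fin m) ℂ)
    (h : ∀ i ∈ s, (f i).PosSemidef) : (∑ i ∈ s, f i).PosSemidef := by
  classical
  induction s using Finset.induction_on with
  | empty => simpa using Matrix.PosSemidef.zero
  | @insert a s hni ih =>
    rw [Finset.sum_insert hni]
    exact Matrix.PosSemidef.add (h _ (Finset.mem_insert_self _ _))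
      (ih fun i hi => h i (Finset.mem_insert_of_mem hi))


lemma chebyshev_scalar {n : ℕ} (w a b : Fin n → ℂ) :
    (∑ i, w i) * (∑ j, w j * (a j * b j)) - (∑ i, w i * a i) * (∑ j, w j * b j)
      = (2 : ℂ)⁻¹ * ∑ i, ∑ j, (w i * w j) * ((a j - a i) * (b j - b i)) := by
  have h1 : ∀ i j : Fin n, (w i * w j) * ((a j - a i) * (b j - b i))
      = w i * (w j * (a j * b j)) + w j * (w i * (a i * b i))
        - (w i * a i) * (w j * b j) - (w j * a j) * (w i * b i) := by
    intro i j; ring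
  simp only [h1, Finset.sum_sub_distrib, Finset.sum_add_distrib]
  have c1 : ∑ i : Fin n, ∑ j : Fin n, w j * (w i * (a i * b i))
      = ∑ i : Fin n, ∑ j : Fin n, w i * (w j * (a j * b j)) := Finset.sum_comm
  have c2 : ∑ i : Fin n, ∑ j : Fin n, (w j * a j) * (w i * b i)
      = ∑ i : Fin n, ∑ j : Fin n, (w i * a i) * (w j * b j) := Finset.sum_comm
  rw [c1, c2, ← Finset.sum_mul_sum, ← Finset.sum_mul_sum]
  ring

theorem chebyshev_hadamard_one_weight (n : ℕ)
    (A B : Fin n → Matrix (Fin n) (Fin n) ℂ)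
    (hA : ∀ i, (A i).IsHermitian) (hB : ∀ i, (B i).IsHermitian)
    (hsync : ∀ i j, ((A j - A i).hadamard (B j - B i)).PosSemidef)
    (ω : Fin n → ℝ) (hω : ∀ i, 0 ≤ ω i) :
    (((∑ i, ω i) • ∑ j, ω j • (A j).hadamard (B j)) -
      (∑ i, ω i • A i).hadamard (∑ j, ω j • B j)).PosSemidef := by
  have key :
      (((∑ i, ω i) • ∑ j, ω j • (A j).hadamard (B j)) -
        (∑ i, ω i • A i).hadamard (∑ j, ω j • B j))
      = ((2⁻¹ : ℝ) : ℂ) • ∑ i, ∑ j,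
          ((ω i * ω j : ℝ) : ℂ) • ((A j - A i).hadamard (B j - B i)) := by
    ext k l
    simp only [Matrix.sub_apply, Matrix.smul_apply, Matrix.sum_apply,
      Matrix.hadamard_apply, smul_eq_mul, Complex.real_smul, Complex.ofReal_sum,
      Complex.ofReal_mul]
    push_cast
    exact chebyshev_scalar (fun i => (ω i : ℂ)) (fun p => A p k l) (fun p => B p k l)
  rw [key]
  exact psd_smul_c _ (by norm_num) (psd_sum _ _ fun i _ =>
    psd_sum _ _ fun j _ =>
      psd_smul_c _ (mul_nonneg (hω i) (hω j)) (hsync i j))
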